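/- The valid placements of an ab×ab Sudoku grid contained in a set S of cells are in one-to-one correspondence with directed paths from the all-zero matrix to the all-one matrix in the graph G_S of almost-balanced matrices; the bijection sends a placement P to the path whose i-th vertex records the set of rows covered by the cells of P in the first i columns. -/

import Mathlib

/-- Number of nonzero (true) entries in row `i` of a 0-1 matrix. -/
def rowCount {a b : ℕ} (M : Fin a → Fin b → Bool) (i : Fin a) : ℕ :=
  (Finset.univ.filter (fun j => M i j = true)).card

/-- A 0-1 matrix is almost balanced if every two rows have numbers of
nonzeros differing by at most one. -/
def AlmostBalanced {a b : ℕ} (M : Fin a → Fin b → Bool) : Prop :=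
  ∀ i i' : Fin a, rowCount M i ≤ rowCount M i' + 1
/-- Total number of ones ("count") of a 0-1 matrix. -/
def mcount {a b : ℕ} (M : Fin b → Fin a → Bool) : ℕ :=
  (Finset.univ.filter (fun p : Fin b × Fin a => M p.1 p.2 = true)).card

/-- Grid row corresponding to matrix coefficient `(j, k)`: the `k`-th row in
the `j`-th group of `a` consecutive grid rows. -/
def rowIdx (a b : ℕ) (j : Fin b) (k : Fin a) : Fin (a*b) :=
  ⟨j.val * a + k.val, by
    have hj := j.isLt; have hk := k.isLt
    have h1 : j.val * a + k.val < (j.val + 1) * a := by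
      have : (j.val + 1) * a = j.val * a + a := by ring
      omega
    have h2 : (j.val + 1) * a ≤ b * a := Nat.mul_le_mul_right a hj
    have h3 : a * b = b * a := Nat.mul_comm a b
    omega⟩

/-- Arcs of the graph `G_S` on almost-balanced `b × a` 0-1 matrices: `B` differs
from `A` only by changing coefficient `(j,k)` (grid row `rowIdx a b j k`) from 0
to 1, the count of `B` equals the (1-indexed) column `c.val + 1`, and the cell
`(rowIdx a b j k, c)` belongs to `S`. -/
def GEdge (a b : ℕ) (S : Finset (Fin (a*b) × Fin (a*b)))
    (A B : Fin b → Fin a → Bool) : Prop :=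
  AlmostBalanced A ∧ AlmostBalanced B ∧
  ∃ (j : Fin b) (k : Fin a) (c : Fin (a*b)),
    A j k = false ∧ B j k = true ∧
    (∀ (j' : Fin b) (k' : Fin a), (j', k') ≠ (j, k) → A j' k' = B j' k') ∧
    mcount B = c.val + 1 ∧ (rowIdx a b j k, c) ∈ S
/-- A valid placement on the `ab × ab` Sudoku grid with `a × b` blocks:
exactly one cell in each row, each column, and each block. -/
def IsValidPlacement (a b : ℕ) (P : Finset (Fin (a*b) × Fin (a*b))) : Prop :=
  (∀ r : Fin (a*b), (P.filter (fun p => p.1 = r)).card = 1) ∧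
  (∀ c : Fin (a*b), (P.filter (fun p => p.2 = c)).card = 1) ∧
  (∀ (i : Fin b) (j : Fin a),
    (P.filter (fun p => p.1.val / a = i.val ∧ p.2.val / b = j.val)).card = 1)
/-- `stepMatrix a b P i` records which grid rows are covered by cells of `P`
lying in the first `i` columns, as a `b × a` 0-1 matrix. -/
def stepMatrix (a b : ℕ) (P : Finset (Fin (a*b) × Fin (a*b))) (i : ℕ) :
    Fin b → Fin a → Bool :=
  fun j k => decide (∃ p ∈ P, p.1 = rowIdx a b j k ∧ p.2.val < i)

namespace PPB
open Finset

lemma bool_ext {x y : Bool} (h : x = true ↔ y = true) : x = y := by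
  cases x <;> cases y <;> simp_all

lemma card_val_lt (n m : ℕ) (h : m ≤ n) :
    ((Finset.univ : Finset (Fin n)).filter fun x => x.val < m).card = m := by
  rw [← Finset.card_range m]
  apply Finset.card_nbij (fun x : Fin n => x.val)
  · intro x hx; simp at hx ⊢; exact hx
  · intro x _ y _ hxy; exact Fin.val_injective hxy
  · intro x hx
    simp only [Finset.coe_range, Set.mem_Iio] at hx
    exact ⟨⟨x, lt_of_lt_of_le hx h⟩, by simp [hx], rfl⟩

lemma card_filter_comp {α β : Type*} [Fintype α] [Fintype β] (f : α → β)
    (hf : Function.Bijective f) (p : β → Prop) [DecidablePred p] :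
    (Finset.univ.filter fun x => p (f x)).card = (Finset.univ.filter p).card := by
  apply Finset.card_nbij f
  · intro x hx; simp at hx ⊢; exact hx
  · intro x _ y _ hxy; exact hf.1 hxy
  · intro y hy
    obtain ⟨x, rfl⟩ := hf.2 y
    simp only [Finset.coe_filter, Set.mem_setOf_eq] at hy
    exact ⟨x, by simp [hy.2], rfl⟩

variable {a b : ℕ}

lemma rowIdx_div (ha : 0 < a) (j : Fin b) (k : Fin a) : (rowIdx a b j k).val / a = j.val := by
  show (j.val * a + k.val) / a = j.val
  rw [add_comm, Nat.add_mul_div_right _ _ ha, Nat.div_eq_of_lt k.isLt, zero_add]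

lemma rowIdx_mod (j : Fin b) (k : Fin a) : (rowIdx a b j k).val % a = k.val := by
  show (j.val * a + k.val) % a = k.val
  rw [mul_comm j.val a, Nat.mul_add_mod, Nat.mod_eq_of_lt k.isLt]

lemma rowIdx_inj (ha : 0 < a) {j j' : Fin b} {k k' : Fin a}
    (h : rowIdx a b j k = rowIdx a b j' k') : j = j' ∧ k = k' := by
  have h1 := rowIdx_div (b := b) ha j k
  have h2 := rowIdx_div (b := b) ha j' k'
  have h3 := rowIdx_mod j k
  have h4 := rowIdx_mod j' k'
  rw [h] at h1 h3
  exact ⟨Fin.ext (h1 ▸ h2 ▸ rfl), Fin.ext (h3 ▸ h4 ▸ rfl)⟩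

lemma rowIdx_surj (ha : 0 < a) (r : Fin (a*b)) : ∃ j k, rowIdx a b j k = r := by
  have hdiv : r.val / a < b := by
    rw [Nat.div_lt_iff_lt_mul ha, Nat.mul_comm b a]; exact r.isLt
  refine ⟨⟨r.val / a, hdiv⟩, ⟨r.val % a, Nat.mod_lt _ ha⟩, ?_⟩
  apply Fin.ext
  show r.val / a * a + r.val % a = r.val
  rw [mul_comm]; exact Nat.div_add_mod _ _

lemma div_eq_iff_nat (hb : 0 < b) (t m : ℕ) : t / b = m ↔ m * b ≤ t ∧ t < (m+1)*b := by
  rw [← Nat.le_div_iff_mul_le hb, ← Nat.div_lt_iff_lt_mul hb]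
  omega

lemma mcount_eq_sum (M : Fin b → Fin a → Bool) : mcount M = ∑ j, rowCount M j := by
  unfold mcount rowCount
  rw [Finset.card_filter, ← Finset.univ_product_univ, Finset.sum_product]
  refine Finset.sum_congr rfl fun j _ => ?_
  rw [Finset.card_filter]

lemma forward (ha : 0 < a) (hb : 0 < b) (S : Finset (Fin (a*b) × Fin (a*b)))
    (P : Finset (Fin (a*b) × Fin (a*b)))
    (hP : IsValidPlacement a b P) (hPS : ∀ p ∈ P, p ∈ S) :
    ((List.range (a*b+1)).map (fun i => stepMatrix a b P i)).Chain' (GEdge a b S) ∧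
    ((List.range (a*b+1)).map (fun i => stepMatrix a b P i)).head? = some (fun _ _ => false) ∧
    ((List.range (a*b+1)).map (fun i => stepMatrix a b P i)).getLast? = some (fun _ _ => true) := by
  obtain ⟨h1, h2, h3⟩ := hP
  have huniq1 : ∀ p q, p ∈ P → q ∈ P → p.1 = q.1 → p = q := by
    intro p q hp hq hpq
    have hc := h1 p.1
    rw [Finset.card_eq_one] at hc
    obtain ⟨x, hx⟩ := hc
    have hp' : p ∈ P.filter (fun z => z.1 = p.1) := by simp [hp]
    have hq' : q ∈ P.filter (fun z => z.1 = p.1) := by simp [hq, hpq.symm]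
    rw [hx, Finset.mem_singleton] at hp' hq'
    rw [hp', hq']
  have huniq2 : ∀ p q, p ∈ P → q ∈ P → p.2 = q.2 → p = q := by
    intro p q hp hq hpq
    have hc := h2 p.2
    rw [Finset.card_eq_one] at hc
    obtain ⟨x, hx⟩ := hc
    have hp' : p ∈ P.filter (fun z => z.2 = p.2) := by simp [hp]
    have hq' : q ∈ P.filter (fun z => z.2 = p.2) := by simp [hq, hpq.symm]
    rw [hx, Finset.mem_singleton] at hp' hq'
    rw [hp', hq']
  have hex : ∀ r, ∃ c, (r, c) ∈ P := by
    intro r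
    have hc := h1 r
    rw [Finset.card_eq_one] at hc
    obtain ⟨x, hx⟩ := hc
    have hxx : x ∈ P.filter (fun z => z.1 = r) := hx ▸ Finset.mem_singleton_self x
    rw [Finset.mem_filter] at hxx
    exact ⟨x.2, by rw [← hxx.2]; exact hxx.1⟩
  choose σ hσ using hex
  have hσinj : Function.Injective σ := by
    intro r r' h
    have heq := huniq2 (r, σ r) (r', σ r') (hσ r) (hσ r') (by simpa using h)
    simpa using congrArg Prod.fst heq
  have hσbij : Function.Bijective σ := Finite.injective_iff_bijective.mp hσinj
  have hcell : ∀ p ∈ P, p = (p.1, σ p.1) := by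
    intro p hp
    exact huniq1 p (p.1, σ p.1) hp (hσ p.1) rfl
  have hstep : ∀ (i : ℕ) (j : Fin b) (k : Fin a),
      stepMatrix a b P i j k = true ↔ (σ (rowIdx a b j k)).val < i := by
    intro i j k
    simp only [stepMatrix, decide_eq_true_eq]
    constructor
    · rintro ⟨p, hp, hp1, hp2⟩
      have hq := huniq1 p (rowIdx a b j k, σ (rowIdx a b j k)) hp (hσ _) (by rw [hp1])
      rw [hq] at hp2
      exact hp2
    · intro h
      exact ⟨(rowIdx a b j k, σ (rowIdx a b j k)), hσ _, rfl, h⟩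
  have hφbij : Function.Bijective (fun p : Fin b × Fin a => σ (rowIdx a b p.1 p.2)) := by
    rw [Fintype.bijective_iff_injective_and_card]
    constructor
    · intro p q h
      have h2' := hσinj h
      obtain ⟨hj, hk⟩ := rowIdx_inj ha h2'
      exact Prod.ext hj hk
    · simp [mul_comm]
  have hmc : ∀ i : ℕ, i ≤ a*b → mcount (stepMatrix a b P i) = i := by
    intro i hi
    unfold mcount
    rw [Finset.filter_congr (q := fun p : Fin b × Fin a => (σ (rowIdx a b p.1 p.2)).val < i)
      (fun p _ => by rw [hstep i p.1 p.2])]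
    rw [card_filter_comp (fun p : Fin b × Fin a => σ (rowIdx a b p.1 p.2)) hφbij
      (fun x => x.val < i), card_val_lt _ _ hi]
  have hτlt : ∀ (j : Fin b) (k : Fin a), (σ (rowIdx a b j k)).val / b < a := by
    intro j k
    rw [Nat.div_lt_iff_lt_mul hb]
    exact (σ _).isLt
  have hτcard : ∀ (j : Fin b) (j' : Fin a),
      (Finset.univ.filter fun k => (⟨(σ (rowIdx a b j k)).val / b, hτlt j k⟩ : Fin a) = j').card = 1 := by
    intro j j'
    rw [← h3 j j']
    apply Finset.card_nbij (fun k => (rowIdx a b j k, σ (rowIdx a b j k)))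
    · intro k hk
      simp only [Finset.mem_coe, Finset.mem_filter, Finset.mem_univ, true_and] at hk ⊢
      refine ⟨hσ _, rowIdx_div ha j k, ?_⟩
      have := congrArg Fin.val hk
      simpa using this
    · intro k _ k' _ h
      exact (rowIdx_inj ha (congrArg Prod.fst h)).2
    · intro p hp
      simp only [Finset.mem_coe, Finset.mem_filter] at hp
      obtain ⟨hpP, hdiv, hdiv2⟩ := hp
      obtain ⟨j2, k2, hr0⟩ := rowIdx_surj ha p.1
      have hj2 : j2 = j := Fin.ext (by rw [← hdiv, ← hr0, rowIdx_div ha])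
      have hr : rowIdx a b j k2 = p.1 := by rw [← hj2]; exact hr0
      have hp2 : σ p.1 = p.2 := (congrArg Prod.snd (hcell p hpP)).symm
      refine ⟨k2, ?_, ?_⟩
      · simp only [Finset.mem_coe, Finset.mem_filter, Finset.mem_univ, true_and]
        apply Fin.ext
        show (σ (rowIdx a b j k2)).val / b = j'.val
        rw [hr, hp2]
        exact hdiv2
      · show (rowIdx a b j k2, σ (rowIdx a b j k2)) = p
        rw [hr, hp2]
  have hτbij : ∀ j : Fin b, Function.Bijective (fun k => (⟨(σ (rowIdx a b j k)).val / b, hτlt j k⟩ : Fin a)) := by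
    intro j
    rw [Fintype.bijective_iff_injective_and_card]
    refine ⟨fun k k' h => ?_, rfl⟩
    have hc := hτcard j ⟨(σ (rowIdx a b j k)).val / b, hτlt j k⟩
    rw [Finset.card_eq_one] at hc
    obtain ⟨x, hx⟩ := hc
    have h1' : k ∈ Finset.univ.filter
        (fun z => (⟨(σ (rowIdx a b j z)).val / b, hτlt j z⟩ : Fin a) = ⟨(σ (rowIdx a b j k)).val / b, hτlt j k⟩) := by
      simp
    have h2' : k' ∈ Finset.univ.filter
        (fun z => (⟨(σ (rowIdx a b j z)).val / b, hτlt j z⟩ : Fin a) = ⟨(σ (rowIdx a b j k)).val / b, hτlt j k⟩) := by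
      simp only [Finset.mem_filter, Finset.mem_univ, true_and]
      exact h.symm
    rw [hx, Finset.mem_singleton] at h1' h2'
    rw [h1', h2']
  have hrc : ∀ (i : ℕ) (j : Fin b), i ≤ a*b →
      i/b ≤ rowCount (stepMatrix a b P i) j ∧ rowCount (stepMatrix a b P i) j ≤ i/b + 1 := by
    intro i j hi
    have hqa : i / b ≤ a := by
      have := Nat.div_le_div_right (c := b) hi
      rwa [Nat.mul_div_cancel a hb] at this
    unfold rowCount
    rw [Finset.filter_congr (q := fun k : Fin a => (σ (rowIdx a b j k)).val < i)
      (fun k _ => by rw [hstep i j k])]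
    constructor
    · calc i/b = (Finset.univ.filter fun k : Fin a =>
            ((⟨(σ (rowIdx a b j k)).val / b, hτlt j k⟩ : Fin a)).val < i/b).card := by
            rw [card_filter_comp _ (hτbij j) (fun x : Fin a => x.val < i/b), card_val_lt _ _ hqa]
        _ ≤ _ := by
            apply Finset.card_le_card
            intro k hk
            simp only [Finset.mem_filter, Finset.mem_univ, true_and] at hk ⊢
            by_contra hcon
            push_neg at hcon
            have h5 := Nat.div_le_div_right (c := b) hcon
            have hk' : (σ (rowIdx a b j k)).val / b < i / b := hk
            omega
    · calc (Finset.univ.filter fun k : Fin a => (σ (rowIdx a b j k)).val < i).card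
          ≤ (Finset.univ.filter fun k : Fin a =>
            ((⟨(σ (rowIdx a b j k)).val / b, hτlt j k⟩ : Fin a)).val < i/b + 1).card := by
            apply Finset.card_le_card
            intro k hk
            simp only [Finset.mem_filter, Finset.mem_univ, true_and] at hk ⊢
            show (σ (rowIdx a b j k)).val / b < i / b + 1
            have := Nat.div_le_div_right (c := b) (Nat.le_of_lt hk)
            omega
        _ ≤ i/b + 1 := by
            by_cases hca : i/b + 1 ≤ a
            · rw [card_filter_comp _ (hτbij j) (fun x : Fin a => x.val < i/b + 1),
                card_val_lt _ _ hca]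
            · calc (Finset.univ.filter fun k : Fin a =>
                  ((⟨(σ (rowIdx a b j k)).val / b, hτlt j k⟩ : Fin a)).val < i/b + 1).card
                  ≤ (Finset.univ : Finset (Fin a)).card := Finset.card_filter_le _ _
                _ = a := by simp
                _ ≤ i/b + 1 := by omega
  have hbal : ∀ i : ℕ, i ≤ a*b → AlmostBalanced (stepMatrix a b P i) := by
    intro i hi j j'
    have e1 := hrc i j hi
    have e2 := hrc i j' hi
    omega
  refine ⟨?_, ?_, ?_⟩
  · rw [List.Chain', List.isChain_iff_getElem]
    intro i hi
    simp only [List.length_map, List.length_range] at hi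
    simp only [List.get_eq_getElem, List.getElem_map, List.getElem_range]
    refine ⟨hbal i (by omega), hbal (i+1) (by omega), ?_⟩
    obtain ⟨r, hr⟩ := hσbij.2 ⟨i, by omega⟩
    obtain ⟨j, k, hjk⟩ := rowIdx_surj ha r
    refine ⟨j, k, ⟨i, by omega⟩, ?_, ?_, ?_, ?_, ?_⟩
    · rw [Bool.eq_false_iff]
      intro hcon
      rw [hstep, hjk, hr] at hcon
      exact lt_irrefl i hcon
    · rw [hstep, hjk, hr]
      exact Nat.lt_succ_self i
    · intro j' k' hne
      apply bool_ext
      rw [hstep, hstep]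
      have hne2 : (σ (rowIdx a b j' k')).val ≠ i := by
        intro hcon
        have he : σ (rowIdx a b j' k') = σ r := by rw [hr]; exact Fin.ext hcon
        have he2 := hσinj he
        rw [← hjk] at he2
        obtain ⟨e1, e2⟩ := rowIdx_inj ha he2
        exact hne (Prod.ext e1 e2)
      omega
    · show mcount (stepMatrix a b P (i+1)) = i + 1
      exact hmc (i+1) (by omega)
    · apply hPS
      rw [hjk, ← hr]
      exact hσ r
  · rw [List.range_succ_eq_map, List.map_cons, List.head?_cons]
    congr 1
    funext j k
    simp [stepMatrix]
  · rw [List.range_succ, List.map_append, List.map_cons, List.map_nil, List.getLast?_concat]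
    congr 1
    funext j k
    exact (hstep (a*b) j k).mpr (σ _).isLt

lemma mcount_flip {A B : Fin b → Fin a → Bool} (j : Fin b) (k : Fin a)
    (hA : A j k = false) (hB : B j k = true)
    (hoth : ∀ j' k', (j', k') ≠ (j, k) → A j' k' = B j' k') :
    mcount B = mcount A + 1 := by
  unfold mcount
  have hins : (Finset.univ.filter fun p : Fin b × Fin a => B p.1 p.2 = true) =
      insert (j, k) (Finset.univ.filter fun p : Fin b × Fin a => A p.1 p.2 = true) := by
    ext p
    simp only [Finset.mem_filter, Finset.mem_univ, true_and, Finset.mem_insert]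
    by_cases hp : p = (j, k)
    · subst hp; simp [hB]
    · have hpp : (p.1, p.2) ≠ (j, k) := by rwa [Prod.mk.eta]
      rw [hoth p.1 p.2 hpp]
      simp [hp]
  rw [hins, Finset.card_insert_of_notMem (by simp [hA])]

lemma mem_iff_step (ha : 0 < a) (P : Finset (Fin (a*b) × Fin (a*b)))
    (h1 : ∀ r : Fin (a*b), (P.filter (fun p => p.1 = r)).card = 1)
    (j : Fin b) (k : Fin a) (c : Fin (a*b)) :
    (rowIdx a b j k, c) ∈ P ↔
      (stepMatrix a b P (c.val+1) j k = true ∧ stepMatrix a b P c.val j k = false) := by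
  have huniq1 : ∀ p q, p ∈ P → q ∈ P → p.1 = q.1 → p = q := by
    intro p q hp hq hpq
    have hc := h1 p.1
    rw [Finset.card_eq_one] at hc
    obtain ⟨x, hx⟩ := hc
    have hp' : p ∈ P.filter (fun z => z.1 = p.1) := by simp [hp]
    have hq' : q ∈ P.filter (fun z => z.1 = p.1) := by simp [hq, hpq.symm]
    rw [hx, Finset.mem_singleton] at hp' hq'
    rw [hp', hq']
  constructor
  · intro hmem
    constructor
    · simp only [stepMatrix, decide_eq_true_eq]
      exact ⟨(rowIdx a b j k, c), hmem, rfl, Nat.lt_succ_self _⟩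
    · rw [Bool.eq_false_iff]
      intro hcon
      simp only [stepMatrix, decide_eq_true_eq] at hcon
      obtain ⟨p, hp, hp1, hp2⟩ := hcon
      have heq := huniq1 p (rowIdx a b j k, c) hp hmem hp1
      rw [heq] at hp2
      exact lt_irrefl _ hp2
  · rintro ⟨ht, hf⟩
    simp only [stepMatrix, decide_eq_true_eq] at ht
    obtain ⟨p, hp, hp1, hp2⟩ := ht
    have hge : ¬ p.2.val < c.val := by
      intro hcon
      rw [Bool.eq_false_iff] at hf
      apply hf
      simp only [stepMatrix, decide_eq_true_eq]
      exact ⟨p, hp, hp1, hcon⟩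
    have h2 : p.2 = c := Fin.ext (by omega)
    have h3 : p = (rowIdx a b j k, c) := Prod.ext hp1 h2
    rwa [← h3]

lemma backward (ha : 0 < a) (hb : 0 < b) (S : Finset (Fin (a*b) × Fin (a*b)))
    (l : List (Fin b → Fin a → Bool)) (hc : l.Chain' (GEdge a b S))
    (hh : l.head? = some (fun _ _ => false)) (hl : l.getLast? = some (fun _ _ => true)) :
    ∃ P : Finset (Fin (a*b) × Fin (a*b)), IsValidPlacement a b P ∧ (∀ p ∈ P, p ∈ S) ∧
      (List.range (a*b+1)).map (fun i => stepMatrix a b P i) = l := by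
  have hne : l ≠ [] := by intro h; rw [h] at hh; simp at hh
  have hL0 : 0 < l.length := List.length_pos_iff.mpr hne
  have h0 : l[0]'hL0 = (fun _ _ => false) := by
    have h := List.head?_eq_head hne
    rw [hh] at h
    rw [List.getElem_zero]
    exact (Option.some_inj.mp h).symm
  have hlast : l[l.length - 1]'(by omega) = (fun _ _ => true) := by
    have h := List.getLast?_eq_getLast hne
    rw [hl] at h
    rw [← List.getLast_eq_getElem]
    exact (Option.some_inj.mp h).symm
  have hget : ∀ (i : ℕ) (h : i+1 < l.length), GEdge a b S (l[i]'(by omega)) (l[i+1]'h) := by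
    rw [List.Chain', List.isChain_iff_getElem] at hc
    intro i h
    have := hc i (by omega)
    simpa using this
  have hmcount : ∀ (i : ℕ) (h : i < l.length), mcount (l[i]'h) = i := by
    intro i
    induction i with
    | zero => intro h; rw [h0]; simp [mcount]
    | succ n ih =>
      intro h
      obtain ⟨_, _, j, k, c, hA, hB, hoth, hmc, hS⟩ := hget n h
      rw [mcount_flip j k hA hB hoth, ih (by omega)]
  have hab : a * b = b * a := Nat.mul_comm a b
  have hlen : l.length = a*b + 1 := by
    have h1 := hmcount (l.length - 1) (by omega)
    rw [hlast] at h1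
    have h2 : mcount (fun _ _ => true : Fin b → Fin a → Bool) = b * a := by
      unfold mcount
      simp [Finset.filter_true_of_mem]
    omega
  have hedge : ∀ i : Fin (a*b), ∃ (j : Fin b) (k : Fin a),
      (l[i.val]'(by omega)) j k = false ∧ (l[i.val+1]'(by omega)) j k = true ∧
      (∀ j' k', (j', k') ≠ (j, k) → (l[i.val]'(by omega)) j' k' = (l[i.val+1]'(by omega)) j' k') ∧
      (rowIdx a b j k, i) ∈ S := by
    intro i
    obtain ⟨_, _, j, k, c, hA, hB, hoth, hmc, hS⟩ := hget i.val (by omega)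
    have hci : c = i := by
      apply Fin.ext
      have := hmcount (i.val+1) (by omega)
      omega
    subst hci
    exact ⟨j, k, hA, hB, hoth, hS⟩
  choose J K hJK1 hJK2 hJK3 hJK4 using hedge
  have hentry : ∀ (i : ℕ) (hi : i < l.length) (j : Fin b) (k : Fin a),
      (l[i]'hi) j k = true ↔ ∃ t : Fin (a*b), t.val < i ∧ J t = j ∧ K t = k := by
    intro i
    induction i with
    | zero =>
      intro hi j k
      rw [h0]
      simp
    | succ n ihn =>
      intro hi j k
      have hn : n < a*b := by omega
      by_cases hcase : (J ⟨n, hn⟩, K ⟨n, hn⟩) = (j, k)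
      · constructor
        · intro _
          exact ⟨⟨n, hn⟩, Nat.lt_succ_self n, congrArg Prod.fst hcase, congrArg Prod.snd hcase⟩
        · intro _
          have h2 := hJK2 ⟨n, hn⟩
          have e1 : J ⟨n, hn⟩ = j := by have := congrArg Prod.fst hcase; simpa using this
          have e2 : K ⟨n, hn⟩ = k := by have := congrArg Prod.snd hcase; simpa using this
          rw [e1, e2] at h2
          exact h2
      · have hoth := hJK3 ⟨n, hn⟩ j k (fun hcon => hcase hcon.symm)
        rw [← hoth, ihn (by omega) j k]
        constructor
        · rintro ⟨t, ht, e1, e2⟩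
          exact ⟨t, by omega, e1, e2⟩
        · rintro ⟨t, ht, e1, e2⟩
          refine ⟨t, ?_, e1, e2⟩
          rcases Nat.lt_succ_iff_lt_or_eq.mp ht with h | h
          · exact h
          · exfalso
            have ht0 : t = ⟨n, hn⟩ := Fin.ext h
            rw [ht0] at e1 e2
            exact hcase (by rw [e1, e2])
  have hkey : ∀ s s' : Fin (a*b), s.val < s'.val → (J s, K s) = (J s', K s') → False := by
    intro s s' hlt h
    have h1' := hJK1 s'
    have h2' := (hentry s'.val (by omega) (J s') (K s')).mpr
      ⟨s, hlt, congrArg Prod.fst h, congrArg Prod.snd h⟩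
    rw [h1'] at h2'
    exact Bool.false_ne_true h2'
  have hΦbij : Function.Bijective (fun t : Fin (a*b) => (J t, K t)) := by
    rw [Fintype.bijective_iff_injective_and_card]
    constructor
    · intro t t' h
      rcases Nat.lt_trichotomy t.val t'.val with h1 | h1 | h1
      · exact absurd (hkey t t' h1 h) not_false
      · exact Fin.ext h1
      · exact absurd (hkey t' t h1 h.symm) not_false
    · simp [mul_comm]
  have hT0 : ∀ (j : Fin b) (k : Fin a), ∃ t, J t = j ∧ K t = k := by
    intro j k
    obtain ⟨t, ht⟩ := hΦbij.2 (j, k)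
    exact ⟨t, congrArg Prod.fst ht, congrArg Prod.snd ht⟩
  choose T hT1 hT2 using hT0
  have hTeq : ∀ t : Fin (a*b), T (J t) (K t) = t := by
    intro t
    exact hΦbij.1 (Prod.ext (hT1 _ _) (hT2 _ _))
  have hentry' : ∀ (i : ℕ) (hi : i < l.length) (j : Fin b) (k : Fin a),
      (l[i]'hi) j k = true ↔ (T j k).val < i := by
    intro i hi j k
    rw [hentry i hi]
    constructor
    · rintro ⟨t, ht, e1, e2⟩
      have : T j k = t := by rw [← e1, ← e2, hTeq]
      rw [this]; exact ht
    · intro h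
      exact ⟨T j k, h, hT1 j k, hT2 j k⟩
  have hrowc : ∀ (i : ℕ) (hi : i < l.length) (j : Fin b),
      rowCount (l[i]'hi) j = (Finset.univ.filter fun k : Fin a => (T j k).val < i).card := by
    intro i hi j
    unfold rowCount
    congr 1
    exact Finset.filter_congr (fun k _ => by rw [hentry' i hi])
  have hbal : ∀ (i : ℕ) (hi : i < l.length), AlmostBalanced (l[i]'hi) := by
    intro i hi
    have hab1 : 0 < a*b := Nat.mul_pos ha hb
    rcases Nat.lt_or_ge (i+1) l.length with h | h
    · exact (hget i h).1
    · have hieq : i = l.length - 1 := by omega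
      have hi1 : i - 1 + 1 < l.length := by omega
      have := (hget (i-1) hi1).2.1
      have heq : i - 1 + 1 = i := by omega
      convert this using 2
      omega
  have hmrow : ∀ (m : ℕ) (hm : m ≤ a) (j : Fin b),
      (Finset.univ.filter fun k : Fin a => (T j k).val < m*b).card = m := by
    intro m hm j
    have hmb : m * b < l.length := by
      rw [hlen]
      have := Nat.mul_le_mul_right b hm
      omega
    have hsum : ∑ j', rowCount (l[m*b]'hmb) j' = m * b := by
      rw [← mcount_eq_sum, hmcount (m*b) hmb]
    have hpair : ∀ j1 j2 : Fin b, rowCount (l[m*b]'hmb) j1 ≤ rowCount (l[m*b]'hmb) j2 + 1 :=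
      hbal (m*b) hmb
    have hge : ∀ j1 : Fin b, m ≤ rowCount (l[m*b]'hmb) j1 := by
      intro j1
      by_contra hcon
      push_neg at hcon
      have hle : ∀ j2 : Fin b, rowCount (l[m*b]'hmb) j2 ≤ m := by
        intro j2
        have := hpair j2 j1
        omega
      have hlt : ∑ j', rowCount (l[m*b]'hmb) j' < ∑ _j' : Fin b, m := by
        apply Finset.sum_lt_sum (fun j2 _ => hle j2) ⟨j1, Finset.mem_univ j1, by omega⟩
      rw [hsum, Finset.sum_const, Finset.card_univ, Fintype.card_fin, smul_eq_mul] at hlt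
      have : b * m = m * b := Nat.mul_comm b m
      omega
    have hallm : ∀ j1 : Fin b, rowCount (l[m*b]'hmb) j1 = m := by
      intro j1
      by_contra hcon
      have hgt : m < rowCount (l[m*b]'hmb) j1 := by
        have := hge j1; omega
      have hlt : ∑ _j' : Fin b, m < ∑ j', rowCount (l[m*b]'hmb) j' := by
        apply Finset.sum_lt_sum (fun j2 _ => hge j2) ⟨j1, Finset.mem_univ j1, hgt⟩
      rw [hsum, Finset.sum_const, Finset.card_univ, Fintype.card_fin, smul_eq_mul] at hlt
      have : b * m = m * b := Nat.mul_comm b m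
      omega
    rw [← hrowc (m*b) hmb j]
    exact hallm j
  have hband : ∀ (j : Fin b) (j' : Fin a),
      (Finset.univ.filter fun k : Fin a => (T j k).val / b = j'.val).card = 1 := by
    intro j j'
    have hsucc : (j'.val+1)*b = j'.val*b + b := by ring
    have e1 := hmrow (j'.val+1) j'.isLt j
    have e0 := hmrow j'.val (le_of_lt j'.isLt) j
    have hsplit : (Finset.univ.filter fun k : Fin a => (T j k).val < (j'.val+1)*b) =
        (Finset.univ.filter fun k : Fin a => (T j k).val < j'.val*b) ∪
        (Finset.univ.filter fun k : Fin a => (T j k).val / b = j'.val) := by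
      ext k
      simp only [Finset.mem_union, Finset.mem_filter, Finset.mem_univ, true_and]
      rw [div_eq_iff_nat hb]
      omega
    have hdisj : Disjoint (Finset.univ.filter fun k : Fin a => (T j k).val < j'.val*b)
        (Finset.univ.filter fun k : Fin a => (T j k).val / b = j'.val) := by
      rw [Finset.disjoint_left]
      intro k hk1 hk2
      simp only [Finset.mem_filter, Finset.mem_univ, true_and] at hk1 hk2
      rw [div_eq_iff_nat hb] at hk2
      omega
    rw [hsplit, Finset.card_union_of_disjoint hdisj, e0] at e1
    omega
  set P : Finset (Fin (a*b) × Fin (a*b)) :=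
    Finset.image (fun t : Fin (a*b) => (rowIdx a b (J t) (K t), t)) Finset.univ with hPdef
  have hPmem : ∀ p : Fin (a*b) × Fin (a*b), p ∈ P ↔ p.1 = rowIdx a b (J p.2) (K p.2) := by
    intro p
    rw [hPdef, Finset.mem_image]
    constructor
    · rintro ⟨t, _, ht⟩
      have ht2 : t = p.2 := congrArg Prod.snd ht
      rw [← congrArg Prod.fst ht, ht2]
    · intro h
      refine ⟨p.2, Finset.mem_univ _, ?_⟩
      rw [← h]
  refine ⟨P, ⟨?_, ?_, ?_⟩, ?_, ?_⟩
  · -- rows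
    intro r
    rw [Finset.card_eq_one]
    obtain ⟨j0, k0, hjk0⟩ := rowIdx_surj ha r
    refine ⟨(r, T j0 k0), ?_⟩
    ext p
    rw [Finset.mem_filter, Finset.mem_singleton, hPmem]
    constructor
    · rintro ⟨h1, h2⟩
      rw [h2, ← hjk0] at h1
      obtain ⟨e1, e2⟩ := rowIdx_inj ha h1
      have : p.2 = T j0 k0 := by rw [← hTeq p.2, e1, e2]
      rw [← h2, ← this]
    · intro h
      rw [h]
      refine ⟨?_, rfl⟩
      show r = rowIdx a b (J (T j0 k0)) (K (T j0 k0))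
      rw [hT1, hT2, hjk0]
  · -- columns
    intro c
    rw [Finset.card_eq_one]
    refine ⟨(rowIdx a b (J c) (K c), c), ?_⟩
    ext p
    rw [Finset.mem_filter, Finset.mem_singleton, hPmem]
    constructor
    · rintro ⟨h1, h2⟩
      rw [h2] at h1
      have hp : p = (p.1, p.2) := rfl
      rw [hp, h1, h2]
    · intro h
      rw [h]
      exact ⟨rfl, rfl⟩
  · -- blocks
    intro j j'
    rw [← hband j j']
    apply Finset.card_nbij (fun p => K p.2)
    · intro p hp
      simp only [Finset.mem_coe, Finset.mem_filter, Finset.mem_univ, true_and] at hp ⊢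
      obtain ⟨hpP, hdiv1, hdiv2⟩ := hp
      rw [hPmem] at hpP
      have hJp : J p.2 = j := by
        apply Fin.ext
        rw [← hdiv1, hpP, rowIdx_div ha]
      have hTp : T j (K p.2) = p.2 := by rw [← hJp, hTeq]
      show (T j (K p.2)).val / b = j'.val
      rw [hTp]
      exact hdiv2
    · intro p hp q hq h
      simp only [Finset.mem_coe, Finset.mem_filter] at hp hq
      obtain ⟨hpP, hdiv1, _⟩ := hp
      obtain ⟨hqP, hdiv1', _⟩ := hq
      rw [hPmem] at hpP hqP
      have hJp : J p.2 = j := Fin.ext (by rw [← hdiv1, hpP, rowIdx_div ha])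
      have hJq : J q.2 = j := Fin.ext (by rw [← hdiv1', hqP, rowIdx_div ha])
      have h' : K p.2 = K q.2 := h
      have h2 : p.2 = q.2 := by
        rw [← hTeq p.2, ← hTeq q.2, hJp, hJq, h']
      have hp' : p = (p.1, p.2) := rfl
      have hq' : q = (q.1, q.2) := rfl
      rw [hp', hq', hpP, hqP, h2]
    · intro k hk
      simp only [Finset.mem_coe, Finset.mem_filter, Finset.mem_univ, true_and] at hk
      refine ⟨(rowIdx a b j k, T j k), ?_, ?_⟩
      · simp only [Finset.mem_coe, Finset.mem_filter]
        refine ⟨?_, ?_, ?_⟩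
        · rw [hPmem]
          show rowIdx a b j k = rowIdx a b (J (T j k)) (K (T j k))
          rw [hT1, hT2]
        · show (rowIdx a b j k).val / a = j.val
          exact rowIdx_div ha j k
        · exact hk
      · show K (T j k) = k
        exact hT2 j k
  · -- subset of S
    intro p hp
    rw [hPmem] at hp
    have := hJK4 p.2
    rwa [← hp] at this
  · -- list equality
    apply List.ext_getElem
    · rw [List.length_map, List.length_range, hlen]
    · intro i h1 h2
      simp only [List.getElem_map, List.getElem_range]
      funext j k
      apply bool_ext
      rw [hentry' i h2 j k]
      simp only [stepMatrix, decide_eq_true_eq]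
      constructor
      · rintro ⟨p, hp, hp1, hp2⟩
        rw [hPmem] at hp
        rw [hp] at hp1
        obtain ⟨e1, e2⟩ := rowIdx_inj ha hp1
        have : p.2 = T j k := by rw [← hTeq p.2, e1, e2]
        rw [← this]
        exact hp2
      · intro h
        refine ⟨(rowIdx a b j k, T j k), ?_, rfl, h⟩
        rw [hPmem]
        show rowIdx a b j k = rowIdx a b (J (T j k)) (K (T j k))
        rw [hT1, hT2]

end PPB


theorem placements_paths_bijection (a b : ℕ) (ha : 0 < a) (hb : 0 < b)
    (S : Finset (Fin (a*b) × Fin (a*b))) :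
    ∃ e : {P : Finset (Fin (a*b) × Fin (a*b)) //
            IsValidPlacement a b P ∧ ∀ p ∈ P, p ∈ S} ≃
          {l : List (Fin b → Fin a → Bool) //
            l.Chain' (GEdge a b S) ∧ l.head? = some (fun _ _ => false) ∧
              l.getLast? = some (fun _ _ => true)},
      ∀ P, (e P).val = (List.range (a * b + 1)).map (fun i => stepMatrix a b P.val i) := by
  classical
  refine ⟨Equiv.ofBijective
    (fun P => ⟨(List.range (a*b+1)).map (fun i => stepMatrix a b P.val i),
      PPB.forward ha hb S P.val P.2.1 P.2.2⟩) ⟨?_, ?_⟩, fun P => rfl⟩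
  · intro P Q h
    have hval := congrArg Subtype.val h
    simp only at hval
    apply Subtype.ext
    apply Finset.ext
    intro p
    have hmaps : ∀ i, i < a*b+1 → stepMatrix a b P.val i = stepMatrix a b Q.val i := by
      intro i hi
      have h2 := congrArg (fun l : List (Fin b → Fin a → Bool) => l[i]?) hval
      simpa [List.getElem?_map, List.getElem?_range, hi] using h2
    obtain ⟨j, k, hjk⟩ := PPB.rowIdx_surj ha p.1
    have hp : p = (rowIdx a b j k, p.2) := by rw [hjk]
    have hlt := p.2.isLt
    rw [hp, PPB.mem_iff_step ha P.val P.2.1.1 j k p.2,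
        PPB.mem_iff_step ha Q.val Q.2.1.1 j k p.2,
        hmaps (p.2.val+1) (by omega), hmaps p.2.val (by omega)]
  · intro L
    obtain ⟨P, hP, hPS, hmap⟩ := PPB.backward ha hb S L.val L.2.1 L.2.2.1 L.2.2.2
    exact ⟨⟨P, hP, hPS⟩, Subtype.ext hmap⟩
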